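/- Combined likelihood ratio in the heterogeneous model: under independence of S and C and uniformity of C on each subpopulation, P(Γ_C=1, Γ_s=1 | C=s, S=s) / P(Γ_C=1, Γ_s=1 | C≠s, S=s) = (N_s − β_s) / (N_s Σ_{j=1}^m p_j β_j − p_s β_s). -/

import Mathlib

open MeasureTheory ProbabilityTheory
open scoped ENNReal

/-- Combined likelihood ratio in the heterogeneous model:
`P(I, E | G, S=s) / P(I, E | G^c, S=s) = (N_s − β_s) / (N_s Σ_j p_j β_j − p_s β_s)`. -/
theorem island_heterogeneous_combined_LR
    {Ω : Type*} [MeasurableSpace Ω] (μ : Measure Ω) [IsProbabilityMeasure μ]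
    {X : Type*} [Fintype X] [DecidableEq X] [MeasurableSpace X] [MeasurableSingletonClass X]
    (m : ℕ) (sub : X → Fin m)
    (Nsz : Fin m → ℕ)
    (hN : ∀ i, (Finset.univ.filter fun x => sub x = i).card = Nsz i)
    (hNpos : ∀ i, 0 < Nsz i)
    (β p : Fin m → ℝ≥0∞)
    (hβpos : ∀ i, β i ≠ 0) (hβsum : ∑ i, β i = 1)
    (hp0 : ∀ i, p i ≠ 0) (hp1 : ∀ i, p i ≤ 1)
    (C S : Ω → X) (hC : Measurable C) (hS : Measurable S)
    (hCsub : ∀ i, μ {ω | sub (C ω) = i} = β i)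
    (hCunifsub : ∀ x : X, μ {ω | C ω = x} = β (sub x) / (Nsz (sub x) : ℝ≥0∞))
    (hCS : IndepFun C S μ)
    (Γ : X → Ω → Bool) (hΓ : ∀ x, Measurable (Γ x))
    (hiid : iIndepFun Γ μ)
    (hBer : ∀ x, μ {ω | Γ x ω = true} = p (sub x))
    (hind : IndepFun (fun ω => (C ω, S ω)) (fun ω x => Γ x ω) μ)
    (s : X)
    (hpos1 : μ ({ω | C ω = s} ∩ {ω | S ω = s}) ≠ 0)
    (hpos2 : μ ({ω | C ω ≠ s} ∩ {ω | S ω = s}) ≠ 0) :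
    μ[|{ω | C ω = s} ∩ {ω | S ω = s}]
        ({ω | Γ (C ω) ω = true} ∩ {ω | Γ s ω = true})
      / μ[|{ω | C ω ≠ s} ∩ {ω | S ω = s}]
          ({ω | Γ (C ω) ω = true} ∩ {ω | Γ s ω = true})
      = ((Nsz (sub s) : ℝ≥0∞) - β (sub s))
        / ((Nsz (sub s) : ℝ≥0∞) * ∑ j, p j * β j - p (sub s) * β (sub s)) := by
  classical
  set n : ℝ≥0∞ := (Nsz (sub s) : ℝ≥0∞) with hn
  have hn0 : n ≠ 0 := by
    simp only [hn, Ne, Nat.cast_eq_zero]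
    exact (hNpos (sub s)).ne'
  have hntop : n ≠ ∞ := ENNReal.natCast_ne_top _
  have hnj0 : ∀ j, (Nsz j : ℝ≥0∞) ≠ 0 := fun j => by
    simp only [Ne, Nat.cast_eq_zero]; exact (hNpos j).ne'
  have hnjtop : ∀ j, (Nsz j : ℝ≥0∞) ≠ ∞ := fun j => ENNReal.natCast_ne_top _
  set q : ℝ≥0∞ := p (sub s) with hq
  set b : ℝ≥0∞ := β (sub s) with hb
  set T : ℝ≥0∞ := ∑ j, p j * β j with hT
  have hΓP : Measurable (fun ω x => Γ x ω) := measurable_pi_lambda _ fun x => hΓ x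
  -- measurable sets
  have hA : MeasurableSet {ω | C ω = s} := hC (measurableSet_singleton s)
  have hB : MeasurableSet {ω | S ω = s} := hS (measurableSet_singleton s)
  have hAc : MeasurableSet {ω | C ω ≠ s} := hA.compl
  -- the joint independence splitting
  have hjoint : ∀ (x y : X) (F : Set (X → Bool)), MeasurableSet F →
      μ ((fun ω => (C ω, S ω)) ⁻¹' {(x, y)} ∩ (fun ω x => Γ x ω) ⁻¹' F)
        = μ {ω | C ω = x} * μ {ω | S ω = y} * μ ((fun ω x => Γ x ω) ⁻¹' F) := by
    intro x y F hF
    rw [hind.measure_inter_preimage_eq_mul _ _ (measurableSet_singleton _) hF]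
    congr 1
    have hset : (fun ω => (C ω, S ω)) ⁻¹' {(x, y)}
        = C ⁻¹' {x} ∩ S ⁻¹' {y} := by
      ext ω
      simp [Prod.ext_iff]
    rw [hset, hCS.measure_inter_preimage_eq_mul _ _ (measurableSet_singleton _)
      (measurableSet_singleton _)]
    rfl
  -- pairwise Bernoulli product
  have hpair : ∀ x : X, x ≠ s →
      μ ({ω | Γ x ω = true} ∩ {ω | Γ s ω = true}) = p (sub x) * q := by
    intro x hx
    have h := (hiid.indepFun hx).measure_inter_preimage_eq_mul {true} {true}
      (measurableSet_singleton true) (measurableSet_singleton true)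
    have h1 : Γ x ⁻¹' {true} = {ω | Γ x ω = true} := rfl
    have h2 : Γ s ⁻¹' {true} = {ω | Γ s ω = true} := rfl
    rw [h1, h2] at h
    rw [h, hBer, hBer]
  -- numerator intersection
  have key1 : μ (({ω | C ω = s} ∩ {ω | S ω = s})
        ∩ ({ω | Γ (C ω) ω = true} ∩ {ω | Γ s ω = true}))
      = μ ({ω | C ω = s} ∩ {ω | S ω = s}) * q := by
    have hset : ({ω | C ω = s} ∩ {ω | S ω = s})
          ∩ ({ω | Γ (C ω) ω = true} ∩ {ω | Γ s ω = true})
        = (fun ω => (C ω, S ω)) ⁻¹' {(s, s)}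
            ∩ (fun ω x => Γ x ω) ⁻¹' (Function.eval s ⁻¹' {true}) := by
      ext ω
      simp only [Set.mem_inter_iff, Set.mem_setOf_eq, Set.mem_preimage,
        Set.mem_singleton_iff, Prod.mk.injEq, Function.eval]
      constructor
      · rintro ⟨⟨h1, h2⟩, _, h4⟩
        exact ⟨⟨h1, h2⟩, h4⟩
      · rintro ⟨⟨h1, h2⟩, h4⟩
        exact ⟨⟨h1, h2⟩, by rw [h1]; exact h4, h4⟩
    rw [hset, hjoint s s _ ((measurable_pi_apply s) (measurableSet_singleton true))]
    have h1 : (fun ω x => Γ x ω) ⁻¹' (Function.eval s ⁻¹' {true})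
        = {ω | Γ s ω = true} := rfl
    rw [h1, hBer]
    have hABset : μ ({ω | C ω = s} ∩ {ω | S ω = s})
        = μ {ω | C ω = s} * μ {ω | S ω = s} := by
      have := hCS.measure_inter_preimage_eq_mul {s} {s}
        (measurableSet_singleton s) (measurableSet_singleton s)
      exact this
    rw [hABset]
  -- numerator conditional value
  have hABtop : μ ({ω | C ω = s} ∩ {ω | S ω = s}) ≠ ∞ := measure_ne_top μ _
  have num_val : μ[|{ω | C ω = s} ∩ {ω | S ω = s}]
      ({ω | Γ (C ω) ω = true} ∩ {ω | Γ s ω = true}) = q := by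
    rw [cond_apply (hA.inter hB), key1, ← mul_assoc,
      ENNReal.inv_mul_cancel hpos1 hABtop, one_mul]
  -- per-point sets for the denominator
  set f : X → Set Ω := fun x =>
    (fun ω => (C ω, S ω)) ⁻¹' {(x, s)}
      ∩ (fun ω x => Γ x ω) ⁻¹' (Function.eval x ⁻¹' {true} ∩ Function.eval s ⁻¹' {true})
    with hf
  set g : X → Set Ω := fun x => (fun ω => (C ω, S ω)) ⁻¹' {(x, s)} with hg
  have hCx : ∀ x : X, (fun ω x => Γ x ω) ⁻¹'
      (Function.eval x ⁻¹' {true} ∩ Function.eval s ⁻¹' {true})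
      = {ω | Γ x ω = true} ∩ {ω | Γ s ω = true} := fun x => rfl
  have hmemf : ∀ x ω, ω ∈ f x ↔ (C ω = x ∧ S ω = s) ∧ Γ x ω = true ∧ Γ s ω = true := by
    intro x ω
    simp [hf, Prod.ext_iff]
  have hmemg : ∀ x ω, ω ∈ g x ↔ C ω = x ∧ S ω = s := by
    intro x ω
    simp [hg, Prod.ext_iff]
  have hfmeas : ∀ x, MeasurableSet (f x) := by
    intro x
    exact ((hC.prodMk hS) (measurableSet_singleton _)).inter
      (hΓP (((measurable_pi_apply x) (measurableSet_singleton true)).inter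
        ((measurable_pi_apply s) (measurableSet_singleton true))))
  have hgmeas : ∀ x, MeasurableSet (g x) := by
    intro x
    exact (hC.prodMk hS) (measurableSet_singleton _)
  have hfdisj : (↑(Finset.univ.erase s) : Set X).PairwiseDisjoint f := by
    intro x _ y _ hxy
    apply Set.disjoint_left.mpr
    intro ω hωx hωy
    exact hxy (((hmemf x ω).mp hωx).1.1.symm.trans ((hmemf y ω).mp hωy).1.1)
  have hgdisj : (↑(Finset.univ.erase s) : Set X).PairwiseDisjoint g := by
    intro x _ y _ hxy
    apply Set.disjoint_left.mpr
    intro ω hωx hωy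
    exact hxy (((hmemg x ω).mp hωx).1.symm.trans ((hmemg y ω).mp hωy).1)
  -- union decompositions
  have hUf : ({ω | C ω ≠ s} ∩ {ω | S ω = s})
        ∩ ({ω | Γ (C ω) ω = true} ∩ {ω | Γ s ω = true})
      = ⋃ x ∈ Finset.univ.erase s, f x := by
    ext ω
    simp only [Set.mem_inter_iff, Set.mem_setOf_eq, Set.mem_iUnion,
      Finset.mem_erase, Finset.mem_univ, and_true, exists_prop]
    constructor
    · rintro ⟨⟨h1, h2⟩, h3, h4⟩
      exact ⟨C ω, h1, (hmemf (C ω) ω).mpr ⟨⟨rfl, h2⟩, h3, h4⟩⟩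
    · rintro ⟨x, hx, hωx⟩
      obtain ⟨⟨h1, h2⟩, h3, h4⟩ := (hmemf x ω).mp hωx
      subst h1
      exact ⟨⟨hx, h2⟩, h3, h4⟩
  have hUg : ({ω | C ω ≠ s} ∩ {ω | S ω = s}) = ⋃ x ∈ Finset.univ.erase s, g x := by
    ext ω
    simp only [Set.mem_inter_iff, Set.mem_setOf_eq, Set.mem_iUnion,
      Finset.mem_erase, Finset.mem_univ, and_true, exists_prop]
    constructor
    · rintro ⟨h1, h2⟩
      exact ⟨C ω, h1, (hmemg (C ω) ω).mpr ⟨rfl, h2⟩⟩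
    · rintro ⟨x, hx, hωx⟩
      obtain ⟨h1, h2⟩ := (hmemg x ω).mp hωx
      subst h1
      exact ⟨hx, h2⟩
  -- abbreviations for the sums
  set K : ℝ≥0∞ := ∑ x ∈ Finset.univ.erase s, μ {ω | C ω = x} with hK
  set L : ℝ≥0∞ := ∑ x ∈ Finset.univ.erase s, μ {ω | C ω = x} * p (sub x) with hL
  -- measure of the denominator base event
  have hBS : μ ({ω | C ω ≠ s} ∩ {ω | S ω = s}) = μ {ω | S ω = s} * K := by
    rw [hUg, measure_biUnion_finset hgdisj fun x _ => hgmeas x]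
    rw [hK, Finset.mul_sum]
    refine Finset.sum_congr rfl fun x _ => ?_
    have : g x = (fun ω => (C ω, S ω)) ⁻¹' {(x, s)} := rfl
    have hset : (fun ω => (C ω, S ω)) ⁻¹' {(x, s)} = C ⁻¹' {x} ∩ S ⁻¹' {s} := by
      ext ω; simp [Prod.ext_iff]
    rw [this, hset, hCS.measure_inter_preimage_eq_mul _ _ (measurableSet_singleton _)
      (measurableSet_singleton _)]
    have h1 : C ⁻¹' {x} = {ω | C ω = x} := rfl
    have h2 : S ⁻¹' {s} = {ω | S ω = s} := rfl
    rw [h1, h2, mul_comm]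
  -- measure of the denominator intersection
  have key2 : μ (({ω | C ω ≠ s} ∩ {ω | S ω = s})
        ∩ ({ω | Γ (C ω) ω = true} ∩ {ω | Γ s ω = true}))
      = μ {ω | S ω = s} * q * L := by
    rw [hUf, measure_biUnion_finset hfdisj fun x _ => hfmeas x]
    rw [hL, Finset.mul_sum]
    refine Finset.sum_congr rfl fun x hx => ?_
    have hxne : x ≠ s := (Finset.mem_erase.mp hx).1
    have : μ (f x) = μ {ω | C ω = x} * μ {ω | S ω = s}
        * μ ((fun ω x' => Γ x' ω) ⁻¹'
          (Function.eval x ⁻¹' {true} ∩ Function.eval s ⁻¹' {true})) :=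
      hjoint x s _ (((measurable_pi_apply x) (measurableSet_singleton true)).inter
        ((measurable_pi_apply s) (measurableSet_singleton true)))
    rw [this, hCx x, hpair x hxne]
    ring
  have hBne : μ {ω | S ω = s} ≠ 0 := by
    intro h
    exact hpos1 (measure_mono_null Set.inter_subset_right h)
  have hBtop : μ {ω | S ω = s} ≠ ∞ := measure_ne_top μ _
  have hKne : K ≠ 0 := by
    intro h
    apply hpos2
    rw [hBS, h, mul_zero]
  -- sum computations via fibers
  have hfib : ∀ F : Fin m → ℝ≥0∞,
      ∑ x : X, F (sub x) = ∑ j, (Nsz j : ℝ≥0∞) * F j := by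
    intro F
    rw [← Finset.sum_fiberwise' Finset.univ sub F]
    refine Finset.sum_congr rfl fun j _ => ?_
    rw [Finset.sum_const, hN j, nsmul_eq_mul]
  have hKid : b / n + K = 1 := by
    have h1 : ∑ x : X, μ {ω | C ω = x} = 1 := by
      calc ∑ x : X, μ {ω | C ω = x}
          = ∑ x : X, β (sub x) / (Nsz (sub x) : ℝ≥0∞) := by
            exact Finset.sum_congr rfl fun x _ => hCunifsub x
        _ = ∑ j, (Nsz j : ℝ≥0∞) * (β j / (Nsz j : ℝ≥0∞)) :=
            hfib fun j => β j / (Nsz j : ℝ≥0∞)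
        _ = ∑ j, β j := by
            refine Finset.sum_congr rfl fun j _ => ?_
            rw [mul_comm, ENNReal.div_mul_cancel (hnj0 j) (hnjtop j)]
        _ = 1 := hβsum
    have h2 := Finset.add_sum_erase Finset.univ (fun x => μ {ω | C ω = x})
      (Finset.mem_univ s)
    rw [h1] at h2
    rw [hK, ← h2]
    simp only [hCunifsub]
    rfl
  have hLid : q * b / n + L = T := by
    have h1 : ∑ x : X, μ {ω | C ω = x} * p (sub x) = T := by
      calc ∑ x : X, μ {ω | C ω = x} * p (sub x)
          = ∑ x : X, β (sub x) / (Nsz (sub x) : ℝ≥0∞) * p (sub x) := by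
            exact Finset.sum_congr rfl fun x _ => by rw [hCunifsub x]
        _ = ∑ j, (Nsz j : ℝ≥0∞) * (β j / (Nsz j : ℝ≥0∞) * p j) :=
            hfib fun j => β j / (Nsz j : ℝ≥0∞) * p j
        _ = ∑ j, p j * β j := by
            refine Finset.sum_congr rfl fun j _ => ?_
            rw [← mul_assoc, mul_comm ((Nsz j : ℝ≥0∞)) _,
              ENNReal.div_mul_cancel (hnj0 j) (hnjtop j), mul_comm]
        _ = T := rfl
    have h2 := Finset.add_sum_erase Finset.univ (fun x => μ {ω | C ω = x} * p (sub x))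
      (Finset.mem_univ s)
    rw [h1] at h2
    rw [hL, ← h2]
    simp only [hCunifsub]
    congr 1
    rw [div_eq_mul_inv, div_eq_mul_inv]
    ring
  -- various finiteness/positivity facts
  have hq0 : q ≠ 0 := hp0 (sub s)
  have hqtop : q ≠ ∞ := (lt_of_le_of_lt (hp1 (sub s)) ENNReal.one_lt_top).ne
  have hKtop : K ≠ ∞ := by
    intro h
    rw [h, add_top] at hKid
    exact (ENNReal.top_ne_one) hKid
  have hTtop : T ≠ ∞ := by
    have : T ≤ 1 := by
      rw [hT, ← hβsum]
      exact Finset.sum_le_sum fun j _ =>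
        (mul_le_mul_left (hp1 j) (β j)).trans_eq (one_mul (β j))
    exact (lt_of_le_of_lt this ENNReal.one_lt_top).ne
  have hLtop : L ≠ ∞ := by
    intro h
    rw [h, add_top] at hLid
    exact hTtop hLid.symm
  have hLne : L ≠ 0 := by
    intro h
    apply hKne
    rw [hK]
    apply Finset.sum_eq_zero
    intro x hx
    have := (Finset.sum_eq_zero_iff.mp (hL ▸ h)) x hx
    rcases mul_eq_zero.mp this with h' | h'
    · exact h'
    · exact absurd h' (hp0 (sub x))
  -- denominator conditional value
  have den_val : μ[|{ω | C ω ≠ s} ∩ {ω | S ω = s}]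
      ({ω | Γ (C ω) ω = true} ∩ {ω | Γ s ω = true}) = q * L / K := by
    rw [cond_apply (hAc.inter hB), key2, hBS,
      ENNReal.mul_inv (Or.inl hBne) (Or.inl hBtop)]
    have hrw : (μ {ω | S ω = s})⁻¹ * K⁻¹ * (μ {ω | S ω = s} * q * L)
        = (μ {ω | S ω = s})⁻¹ * μ {ω | S ω = s} * (q * L * K⁻¹) := by ring
    rw [hrw, ENNReal.inv_mul_cancel hBne hBtop, one_mul, div_eq_mul_inv]
  -- key subtraction identities
  have hnK : n * K = n - b := by
    apply ENNReal.eq_sub_of_add_eq (by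
      intro h
      rw [hb] at h
      have : β (sub s) ≤ 1 := by
        rw [← hβsum]
        exact Finset.single_le_sum (fun j _ => zero_le) (Finset.mem_univ (sub s))
      rw [h] at this
      exact (lt_of_le_of_lt this ENNReal.one_lt_top).ne rfl)
    have := congrArg (fun z => n * z) hKid
    simp only [mul_add, mul_one] at this
    rw [mul_comm n (b / n), ENNReal.div_mul_cancel hn0 hntop] at this
    rw [add_comm]
    exact this
  have hnL : n * L = n * T - q * b := by
    apply ENNReal.eq_sub_of_add_eq (by
      exact ENNReal.mul_ne_top hqtop ((lt_of_le_of_lt (by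
        rw [hb, ← hβsum]
        exact Finset.single_le_sum (fun j _ => zero_le) (Finset.mem_univ (sub s)))
        ENNReal.one_lt_top).ne))
    have := congrArg (fun z => n * z) hLid
    simp only [mul_add] at this
    rw [mul_comm n (q * b / n), ENNReal.div_mul_cancel hn0 hntop] at this
    rw [add_comm]
    exact this
  -- final computation
  rw [num_val, den_val]
  rw [div_eq_mul_inv, ENNReal.inv_div (Or.inl hKtop) (Or.inl hKne)]
  have h1 : q * (K / (q * L)) = q * K / (q * L) := by
    rw [div_eq_mul_inv, div_eq_mul_inv]; ring
  rw [h1, ENNReal.mul_div_mul_left K L hq0 hqtop,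
    ← ENNReal.mul_div_mul_left K L hn0 hntop, hnK, hnL]
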